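/- arXiv:1103.5116 — 2 statements merged into one kernel-verified Lean document; each statement's English description precedes it below -/
import Mathlib

section
/- Let (X,d) be a metric space, δ > 0, α ∈ (0,1), C ≥ 0 and D > 0. Suppose u : X → ℝ satisfies |u(x) − u(y)| ≤ C·d(x,y)^α whenever d(x,y) ≤ δ, and suppose that for every x, y ∈ X and every positive integer n there exist points p₀ = x, p₁, …, pₙ = y with d(p_j, p_{j+1}) ≤ d(x,y)/√n for all j. Then for all x, y ∈ X with d(x,y) ≤ D one has |u(x) − u(y)| ≤ C·(4D²/δ² + 1)·d(x,y)^α. -/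
theorem stmt0 {X : Type*} [MetricSpace X] (δ : ℝ) (hδ : 0 < δ)
    (α : ℝ) (hα : α ∈ Set.Ioo (0:ℝ) 1) (C : ℝ) (hC : 0 ≤ C) (D : ℝ) (hD : 0 < D)
    (u : X → ℝ)
    (hloc : ∀ x y : X, dist x y ≤ δ → |u x - u y| ≤ C * dist x y ^ α)
    (hchain : ∀ x y : X, ∀ n : ℕ, 0 < n → ∃ p : ℕ → X, p 0 = x ∧ p n = y ∧
      ∀ j < n, dist (p j) (p (j + 1)) ≤ dist x y / Real.sqrt n)
    (x y : X) (hxy : dist x y ≤ D) :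
    |u x - u y| ≤ C * (4 * D ^ 2 / δ ^ 2 + 1) * dist x y ^ α := by
  obtain ⟨hα0, hα1⟩ := hα
  set d := dist x y with hd
  rcases eq_or_lt_of_le (dist_nonneg : 0 ≤ d) with h0 | hdpos
  · have hxy0 : x = y := by
      rw [← dist_eq_zero]; exact h0.symm
    subst hxy0
    simp only [sub_self, abs_zero]
    positivity
  -- choose n
  set n : ℕ := ⌈(d / δ) ^ 2⌉₊ with hn
  have hdδ : 0 < d / δ := div_pos hdpos hδ
  have hnpos : 0 < n := Nat.ceil_pos.mpr (by positivity)
  have hnge : (d / δ) ^ 2 ≤ (n : ℝ) := Nat.le_ceil _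
  have hsqrt : d / δ ≤ Real.sqrt n := by
    exact (Real.le_sqrt hdδ.le (Nat.cast_nonneg n)).mpr hnge
  have hsqrtpos : 0 < Real.sqrt n := lt_of_lt_of_le hdδ hsqrt
  have hstepδ : d / Real.sqrt n ≤ δ := by
    rw [div_le_iff₀ hsqrtpos]
    calc d = (d / δ) * δ := by field_simp
    _ ≤ Real.sqrt n * δ := by nlinarith
    _ = δ * Real.sqrt n := mul_comm _ _
  have hone : (1 : ℝ) ≤ Real.sqrt n := by
    have : (1 : ℝ) ≤ (n : ℝ) := by exact_mod_cast hnpos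
    calc (1:ℝ) = Real.sqrt 1 := (Real.sqrt_one).symm
    _ ≤ Real.sqrt n := Real.sqrt_le_sqrt this
  have hstepd : d / Real.sqrt n ≤ d := by
    rw [div_le_iff₀ hsqrtpos]
    nlinarith
  obtain ⟨p, hp0, hpn, hpd⟩ := hchain x y n hnpos
  have key : ∀ j < n, |u (p (j + 1)) - u (p j)| ≤ C * d ^ α := by
    intro j hj
    have h1 := hpd j hj
    calc |u (p (j+1)) - u (p j)| = |u (p j) - u (p (j+1))| := abs_sub_comm _ _
    _ ≤ C * dist (p j) (p (j+1)) ^ α := hloc _ _ (h1.trans hstepδ)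
    _ ≤ C * d ^ α := by
        apply mul_le_mul_of_nonneg_left _ hC
        exact Real.rpow_le_rpow dist_nonneg (h1.trans hstepd) hα0.le
  have tele : u y - u x = ∑ j ∈ Finset.range n, (u (p (j + 1)) - u (p j)) := by
    rw [Finset.sum_range_sub (fun j => u (p j)), hp0, hpn]
  have hsum : |u x - u y| ≤ (n : ℝ) * (C * d ^ α) := by
    rw [abs_sub_comm, tele]
    calc |∑ j ∈ Finset.range n, (u (p (j + 1)) - u (p j))|
        ≤ ∑ j ∈ Finset.range n, |u (p (j + 1)) - u (p j)| := Finset.abs_sum_le_sum_abs _ _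
    _ ≤ ∑ j ∈ Finset.range n, (C * d ^ α) := by
        apply Finset.sum_le_sum
        intro j hj
        exact key j (Finset.mem_range.mp hj)
    _ = (n : ℝ) * (C * d ^ α) := by simp [mul_comm]
  have hnle : (n : ℝ) ≤ 4 * D ^ 2 / δ ^ 2 + 1 := by
    have h1 : (n : ℝ) < (d / δ) ^ 2 + 1 := Nat.ceil_lt_add_one (by positivity)
    have h2 : (d / δ) ^ 2 ≤ D ^ 2 / δ ^ 2 := by
      rw [div_pow]
      apply div_le_div_of_nonneg_right _ (by positivity)
      nlinarith
    have h3 : 4 * D ^ 2 / δ ^ 2 = D ^ 2 / δ ^ 2 + 3 * D ^ 2 / δ ^ 2 := by ring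
    have h4 : 0 ≤ 3 * D ^ 2 / δ ^ 2 := by positivity
    linarith
  calc |u x - u y| ≤ (n : ℝ) * (C * d ^ α) := hsum
  _ ≤ (4 * D ^ 2 / δ ^ 2 + 1) * (C * d ^ α) := by
      apply mul_le_mul_of_nonneg_right hnle
      positivity
  _ = C * (4 * D ^ 2 / δ ^ 2 + 1) * d ^ α := by ring
end

section
/- Let (X,d,μ) be a metric measure space and let r₀ > 0, C_D ≥ 1 be such that 0 < μ(B(x,2r)) ≤ C_D·μ(B(x,r)) < ∞ for all x ∈ X and 0 < r ≤ r₀. Let α ∈ (0,1), let u : X → ℝ be continuous and locally integrable, and set M = sup { inf_{c∈ℝ} (1/(r^α·μ(B(x,r))))·∫_{B(x,r)} |u(y) − c| dμ(y) : x ∈ X, 0 < r ≤ r₀ }. If M < ∞, then there exists a constant K depending only on C_D and α such that |u(x) − u(y)| ≤ K·M·d(x,y)^α for all x, y ∈ X with 2·d(x,y) ≤ r₀. -/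
open MeasureTheory Metric

set_option maxHeartbeats 1000000 in
lemma campanato_key {X : Type} [MetricSpace X] [MeasurableSpace X] [BorelSpace X]
    (μ : Measure X) (C_D α r₀ : ℝ) (hCD : 1 ≤ C_D) (hα0 : 0 < α)
    (hdbl : ∀ (x : X) (r : ℝ), 0 < r → r ≤ r₀ →
        0 < μ (ball x r) ∧ μ (ball x (2 * r)) ≤ ENNReal.ofReal C_D * μ (ball x r) ∧
        μ (ball x r) < ⊤)
    (u : X → ℝ) (hu : Continuous u)
    (hint : ∀ (x : X) (r : ℝ), 0 < r → r ≤ r₀ → IntegrableOn u (ball x r) μ)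
    (N : ℝ) (hN : 0 ≤ N)
    (hopt : ∀ (x : X) (r : ℝ), 0 < r → r ≤ r₀ → ∃ c : ℝ,
        ∫ w in ball x r, |u w - c| ∂μ ≤ N * r ^ α * (μ (ball x r)).toReal)
    (z : X) (s : ℝ) (hs : 0 < s) (hsr₀ : s ≤ r₀) (c B : ℝ) (hB : 0 ≤ B)
    (hc : ∫ w in ball z s, |u w - c| ∂μ ≤ B * (μ (ball z s)).toReal) :
    |u z - c| ≤ C_D * B + (2 * C_D * N / (1 - 2 ^ (-α))) * s ^ α := by
  have hCD0 : (0:ℝ) ≤ C_D := by linarith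
  have h2a : (0:ℝ) < 1 - 2 ^ (-α) := by
    have : (2:ℝ) ^ (-α) < 1 :=
      Real.rpow_lt_one_of_one_lt_of_neg one_lt_two (by linarith)
    linarith
  have h2a1 : (2:ℝ) ^ (-α) ≤ 1 := by
    have : (2:ℝ) ^ (-α) < 1 :=
      Real.rpow_lt_one_of_one_lt_of_neg one_lt_two (by linarith)
    linarith
  have h2apos : (0:ℝ) < 2 ^ (-α) := Real.rpow_pos_of_pos two_pos _
  set T : ℝ := 2 * C_D * N / (1 - 2 ^ (-α)) with hTdef
  have hT0 : 0 ≤ T := div_nonneg (by positivity) h2a.le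
  have hTmul : T * (1 - 2 ^ (-α)) = 2 * C_D * N := div_mul_cancel₀ _ h2a.ne'
  -- integrability of |u - c| on balls
  have habs : ∀ (s' : ℝ) (c' : ℝ), 0 < s' → s' ≤ r₀ →
      IntegrableOn (fun w => |u w - c'|) (ball z s') μ := by
    intro s' c' h1 h2
    exact ((hint z s' h1 h2).sub
      (integrableOn_const (hdbl z s' h1 h2).2.2.ne)).abs
  refine le_of_forall_pos_le_add ?_
  intro δ hδ
  -- continuity at z
  obtain ⟨t₀, ht₀, hball⟩ := Metric.continuousAt_iff.mp hu.continuousAt δ hδ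
  -- main induction
  have main : ∀ n : ℕ, ∀ (s' c' B' : ℝ), 0 < s' → s' ≤ r₀ → 0 ≤ B' →
      s' ≤ 2 ^ n * t₀ →
      (∫ w in ball z s', |u w - c'| ∂μ ≤ B' * (μ (ball z s')).toReal) →
      |u z - c'| ≤ C_D * B' + T * s' ^ α + δ := by
    intro n
    induction n with
    | zero =>
      intro s' c' B' hs' hs'r₀ hB' hst hc'
      obtain ⟨hpos, _, hfin⟩ := hdbl z s' hs' hs'r₀
      set V := (μ (ball z s')).toReal with hV
      have hVpos : 0 < V := ENNReal.toReal_pos hpos.ne' hfin.ne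
      have hpt : ∀ w ∈ ball z s', |u z - c'| ≤ δ + |u w - c'| := by
        intro w hw
        have hw' : dist w z < t₀ := by
          rw [mem_ball] at hw
          simpa using lt_of_lt_of_le hw (by simpa using hst)
        have h1 : |u w - u z| < δ := by
          rw [← Real.dist_eq]; exact hball hw'
        have h2 : |u z - c'| ≤ |u z - u w| + |u w - c'| := abs_sub_le _ _ _
        rw [abs_sub_comm (u z) (u w)] at h2
        linarith
      have hi := habs s' c' hs' hs'r₀
      have key0 : V * |u z - c'| ≤ V * (δ + B') := by
        calc V * |u z - c'| = ∫ _ in ball z s', |u z - c'| ∂μ := by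
              rw [setIntegral_const, smul_eq_mul, measureReal_def]
          _ ≤ ∫ w in ball z s', (δ + |u w - c'|) ∂μ := by
              refine setIntegral_mono_on (integrableOn_const hfin.ne)
                ((integrableOn_const hfin.ne).add hi) measurableSet_ball ?_
              intro w hw; exact hpt w hw
          _ = δ * V + ∫ w in ball z s', |u w - c'| ∂μ := by
              rw [integral_add (show IntegrableOn (fun _ => δ) (ball z s') μ from integrableOn_const hfin.ne) hi,
                setIntegral_const, smul_eq_mul, measureReal_def, ← hV]
              ring
          _ ≤ δ * V + B' * V := by linarith
          _ = V * (δ + B') := by ring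
      have h3 : |u z - c'| ≤ δ + B' := le_of_mul_le_mul_left key0 hVpos
      have h4 : 0 ≤ T * s' ^ α := mul_nonneg hT0 (Real.rpow_nonneg hs'.le _)
      nlinarith
    | succ n ih =>
      intro s' c' B' hs' hs'r₀ hB' hst hc'
      by_cases hcase : s' ≤ 2 ^ n * t₀
      · exact ih s' c' B' hs' hs'r₀ hB' hcase hc'
      · have hhalf : s' / 2 ≤ 2 ^ n * t₀ := by
          rw [pow_succ] at hst; nlinarith
        have hs2 : 0 < s' / 2 := by linarith
        have hs2r₀ : s' / 2 ≤ r₀ := by linarith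
        obtain ⟨c₁, hc₁⟩ := hopt z (s' / 2) hs2 hs2r₀
        set B₁ : ℝ := N * (s' / 2) ^ α with hB₁def
        have hB₁ : 0 ≤ B₁ := mul_nonneg hN (Real.rpow_nonneg hs2.le _)
        have ih1 := ih (s' / 2) c₁ B₁ hs2 hs2r₀ hB₁ hhalf hc₁
        obtain ⟨hpos, _, hfin⟩ := hdbl z s' hs' hs'r₀
        obtain ⟨hpos', hdub', hfin'⟩ := hdbl z (s' / 2) hs2 hs2r₀
        set V := (μ (ball z s')).toReal with hVdef
        set V' := (μ (ball z (s' / 2))).toReal with hV'def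
        have hV'pos : 0 < V' := ENNReal.toReal_pos hpos'.ne' hfin'.ne
        have hVV' : V ≤ C_D * V' := by
          have h1 : μ (ball z s') ≤ ENNReal.ofReal C_D * μ (ball z (s' / 2)) := by
            have e : (2 : ℝ) * (s' / 2) = s' := by ring
            have h1' := hdub'
            rw [e] at h1'
            exact h1'
          have h2 : (ENNReal.ofReal C_D * μ (ball z (s' / 2))).toReal = C_D * V' := by
            rw [ENNReal.toReal_mul, ENNReal.toReal_ofReal hCD0]
          calc V ≤ (ENNReal.ofReal C_D * μ (ball z (s' / 2))).toReal :=
                ENNReal.toReal_mono (ENNReal.mul_ne_top ENNReal.ofReal_ne_top hfin'.ne) h1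
            _ = C_D * V' := h2
        have hi := habs s' c' hs' hs'r₀
        have hi' : IntegrableOn (fun w => |u w - c'|) (ball z (s' / 2)) μ :=
          hi.mono_set (ball_subset_ball (by linarith))
        have hi₁ := habs (s' / 2) c₁ hs2 hs2r₀
        have hmono : ∫ w in ball z (s' / 2), |u w - c'| ∂μ ≤
            ∫ w in ball z s', |u w - c'| ∂μ :=
          setIntegral_mono_set hi (Filter.Eventually.of_forall fun w => abs_nonneg _)
            (HasSubset.Subset.eventuallyLE (ball_subset_ball (by linarith)))
        have hcc₁ : |c' - c₁| ≤ C_D * B' + B₁ := by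
          have key1 : V' * |c' - c₁| ≤ V' * (C_D * B' + B₁) := by
            calc V' * |c' - c₁| = ∫ _ in ball z (s' / 2), |c' - c₁| ∂μ := by
                  rw [setIntegral_const, smul_eq_mul, measureReal_def]
              _ ≤ ∫ w in ball z (s' / 2), (|u w - c'| + |u w - c₁|) ∂μ := by
                  refine setIntegral_mono_on (integrableOn_const hfin'.ne)
                    (hi'.add hi₁) measurableSet_ball ?_
                  intro w _
                  have h2 : |c' - c₁| ≤ |c' - u w| + |u w - c₁| := abs_sub_le _ _ _
                  rw [abs_sub_comm c' (u w)] at h2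
                  linarith
              _ = (∫ w in ball z (s' / 2), |u w - c'| ∂μ)
                  + ∫ w in ball z (s' / 2), |u w - c₁| ∂μ := integral_add hi' hi₁
              _ ≤ B' * V + B₁ * V' := by
                  have h4 := le_trans hmono hc'
                  linarith [hc₁]
              _ ≤ V' * (C_D * B' + B₁) := by
                  nlinarith [mul_le_mul_of_nonneg_left hVV' hB']
          exact le_of_mul_le_mul_left key1 hV'pos
        have htri : |u z - c'| ≤ |u z - c₁| + |c' - c₁| := by
          have := abs_sub_le (u z) c₁ c'
          rw [abs_sub_comm c₁ c'] at this
          linarith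
        have hhalfpow : (s' / 2) ^ α = s' ^ α * 2 ^ (-α) := by
          rw [Real.div_rpow hs'.le (by norm_num), Real.rpow_neg (by norm_num)]
          ring
        have hspow : 0 ≤ s' ^ α := Real.rpow_nonneg hs'.le _
        have hgoal : C_D * B₁ + B₁ + T * (s' / 2) ^ α ≤ T * s' ^ α := by
          rw [hhalfpow, hB₁def, hhalfpow]
          have e1 : T * s' ^ α * (1 - 2 ^ (-α)) = 2 * C_D * N * s' ^ α := by
            rw [mul_right_comm, hTmul]
          have hP : 0 ≤ N * s' ^ α := mul_nonneg hN hspow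
          nlinarith [mul_nonneg (mul_nonneg (by linarith : (0:ℝ) ≤ C_D + 1) hP)
              (by linarith : (0:ℝ) ≤ 1 - 2 ^ (-α)),
            mul_nonneg (by linarith : (0:ℝ) ≤ C_D - 1) hP]
        calc |u z - c'| ≤ |u z - c₁| + |c' - c₁| := htri
          _ ≤ (C_D * B₁ + T * (s' / 2) ^ α + δ) + (C_D * B' + B₁) := by linarith
          _ ≤ C_D * B' + T * s' ^ α + δ := by linarith
  obtain ⟨n, hn⟩ := pow_unbounded_of_one_lt (s / t₀) one_lt_two
  have hst : s ≤ 2 ^ n * t₀ := by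
    rw [div_lt_iff₀ ht₀] at hn
    linarith
  exact main n s c B hs hsr₀ hB hst hc

set_option maxHeartbeats 1000000 in
theorem stmt14 (C_D α : ℝ) (hCD : 1 ≤ C_D) (hα : α ∈ Set.Ioo (0:ℝ) 1) :
    ∃ K : ℝ, ∀ (X : Type) [MetricSpace X] [MeasurableSpace X] [BorelSpace X]
      (μ : Measure X) (r₀ : ℝ), 0 < r₀ →
      (∀ (x : X) (r : ℝ), 0 < r → r ≤ r₀ →
        0 < μ (ball x r) ∧
        μ (ball x (2 * r)) ≤ ENNReal.ofReal C_D * μ (ball x r) ∧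
        μ (ball x r) < ⊤) →
      ∀ u : X → ℝ, Continuous u →
      (∀ (x : X) (r : ℝ), 0 < r → r ≤ r₀ → IntegrableOn u (ball x r) μ) →
      ∀ M : ℝ, 0 ≤ M →
      (∀ (x : X) (r : ℝ), 0 < r → r ≤ r₀ → ∀ ε : ℝ, 0 < ε → ∃ c : ℝ,
        ∫ y in ball x r, |u y - c| ∂μ ≤ (M + ε) * r ^ α * (μ (ball x r)).toReal) →
      ∀ x y : X, 2 * dist x y ≤ r₀ → |u x - u y| ≤ K * M * dist x y ^ α := by
  obtain ⟨hα0, hα1⟩ := hα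
  have hCD0 : (0:ℝ) ≤ C_D := by linarith
  have h2a : (0:ℝ) < 1 - 2 ^ (-α) := by
    have : (2:ℝ) ^ (-α) < 1 :=
      Real.rpow_lt_one_of_one_lt_of_neg one_lt_two (by linarith)
    linarith
  have h2pow : (0:ℝ) < 2 ^ α := Real.rpow_pos_of_pos two_pos _
  refine ⟨2 ^ α * C_D + 2 ^ α * C_D ^ 3 + (2 ^ α + 1) * (2 * C_D / (1 - 2 ^ (-α))), ?_⟩
  set K : ℝ := 2 ^ α * C_D + 2 ^ α * C_D ^ 3 + (2 ^ α + 1) * (2 * C_D / (1 - 2 ^ (-α)))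
    with hKdef
  have hKpos : 0 < K := by
    have h1 : 0 < 2 * C_D / (1 - 2 ^ (-α)) := div_pos (by linarith) h2a
    have t1 : (0:ℝ) < 2 ^ α * C_D := mul_pos h2pow (by linarith)
    have t2 : (0:ℝ) < 2 ^ α * C_D ^ 3 := mul_pos h2pow (pow_pos (by linarith) 3)
    have t3 : (0:ℝ) < (2 ^ α + 1) * (2 * C_D / (1 - 2 ^ (-α))) := mul_pos (by linarith) h1
    rw [hKdef]; linarith
  intro X _ _ _ μ r₀ hr₀ hdbl u hu hint M hM hopt x y hxy
  set d : ℝ := dist x y with hddef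
  rcases eq_or_lt_of_le (dist_nonneg : (0:ℝ) ≤ d) with hd0 | hd0
  · -- d = 0, so x = y
    have hxy' : x = y := dist_eq_zero.mp hd0.symm
    have hdz : d = 0 := by rw [hddef]; exact hd0.symm
    rw [hxy', sub_self, abs_zero, hdz, Real.zero_rpow hα0.ne', mul_zero]
  · -- d > 0
    have hdα : 0 < d ^ α := Real.rpow_pos_of_pos hd0 α
    suffices h : ∀ ε : ℝ, 0 < ε → |u x - u y| ≤ K * (M + ε) * d ^ α by
      refine le_of_forall_pos_le_add ?_
      intro ε' hε'
      have hden : 0 < K * d ^ α := mul_pos hKpos hdα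
      have := h (ε' / (K * d ^ α)) (div_pos hε' hden)
      have heq : K * (M + ε' / (K * d ^ α)) * d ^ α = K * M * d ^ α + ε' := by
        have hKne : K ≠ 0 := hKpos.ne'
        have hdne : d ^ α ≠ 0 := hdα.ne'
        field_simp
      rw [heq] at this
      linarith
    intro ε hε
    set N : ℝ := M + ε with hNdef
    have hN0 : 0 ≤ N := by linarith
    have hopt' : ∀ (z : X) (r : ℝ), 0 < r → r ≤ r₀ → ∃ c : ℝ,
        ∫ w in ball z r, |u w - c| ∂μ ≤ N * r ^ α * (μ (ball z r)).toReal :=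
      fun z r h1 h2 => hopt z r h1 h2 ε hε
    set r : ℝ := 2 * d with hrdef
    have hr : 0 < r := by positivity
    have hrr₀ : r ≤ r₀ := hxy
    have hdr₀ : d ≤ r₀ := by linarith
    obtain ⟨c, hc⟩ := hopt' x r hr hrr₀
    have hrα : 0 ≤ N * r ^ α := mul_nonneg hN0 (Real.rpow_nonneg hr.le _)
    have h1 : |u x - c| ≤ C_D * (N * r ^ α) + (2 * C_D * N / (1 - 2 ^ (-α))) * r ^ α :=
      campanato_key μ C_D α r₀ hCD hα0 hdbl u hu hint N hN0 hopt' x r hr hrr₀ c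
        (N * r ^ α) hrα hc
    -- estimate on ball y d
    have hsub1 : ball y d ⊆ ball x r := by
      intro w hw
      rw [mem_ball] at hw ⊢
      calc dist w x ≤ dist w y + dist y x := dist_triangle _ _ _
        _ < d + d := by rw [dist_comm y x]; exact add_lt_add_of_lt_of_le hw (le_of_eq rfl)
        _ = r := by rw [hrdef]; ring
    obtain ⟨hposx, _, hfinx⟩ := hdbl x r hr hrr₀
    obtain ⟨hposd, hdubd, hfind⟩ := hdbl y d hd0 hdr₀
    obtain ⟨_, hdub2d, hfin2d⟩ := hdbl y (2 * d) (by linarith) (by linarith)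
    have hiabs : IntegrableOn (fun w => |u w - c|) (ball x r) μ :=
      ((hint x r hr hrr₀).sub (integrableOn_const hfinx.ne)).abs
    have hmono : ∫ w in ball y d, |u w - c| ∂μ ≤ ∫ w in ball x r, |u w - c| ∂μ :=
      setIntegral_mono_set hiabs (Filter.Eventually.of_forall fun w => abs_nonneg _)
        (HasSubset.Subset.eventuallyLE hsub1)
    have hμchain : μ (ball x r) ≤ ENNReal.ofReal C_D * (ENNReal.ofReal C_D * μ (ball y d)) := by
      have hsub2 : ball x r ⊆ ball y (2 * (2 * d)) := by
        intro w hw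
        rw [mem_ball] at hw ⊢
        calc dist w y ≤ dist w x + dist x y := dist_triangle _ _ _
          _ < r + d := by exact add_lt_add_of_lt_of_le hw (le_of_eq rfl)
          _ ≤ 2 * (2 * d) := by rw [hrdef]; linarith
      calc μ (ball x r) ≤ μ (ball y (2 * (2 * d))) := measure_mono hsub2
        _ ≤ ENNReal.ofReal C_D * μ (ball y (2 * d)) := hdub2d
        _ ≤ ENNReal.ofReal C_D * (ENNReal.ofReal C_D * μ (ball y d)) := by
            exact mul_le_mul_right hdubd _
    have hμreal : (μ (ball x r)).toReal ≤ C_D ^ 2 * (μ (ball y d)).toReal := by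
      have hne : ENNReal.ofReal C_D * (ENNReal.ofReal C_D * μ (ball y d)) ≠ ⊤ :=
        ENNReal.mul_ne_top ENNReal.ofReal_ne_top
          (ENNReal.mul_ne_top ENNReal.ofReal_ne_top hfind.ne)
      calc (μ (ball x r)).toReal
          ≤ (ENNReal.ofReal C_D * (ENNReal.ofReal C_D * μ (ball y d))).toReal :=
            ENNReal.toReal_mono hne hμchain
        _ = C_D ^ 2 * (μ (ball y d)).toReal := by
            rw [ENNReal.toReal_mul, ENNReal.toReal_mul, ENNReal.toReal_ofReal hCD0]
            ring
    have hc2 : ∫ w in ball y d, |u w - c| ∂μ ≤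
        (C_D ^ 2 * (N * r ^ α)) * (μ (ball y d)).toReal := by
      calc ∫ w in ball y d, |u w - c| ∂μ ≤ ∫ w in ball x r, |u w - c| ∂μ := hmono
        _ ≤ N * r ^ α * (μ (ball x r)).toReal := hc
        _ ≤ N * r ^ α * (C_D ^ 2 * (μ (ball y d)).toReal) := by
            exact mul_le_mul_of_nonneg_left hμreal hrα
        _ = (C_D ^ 2 * (N * r ^ α)) * (μ (ball y d)).toReal := by ring
    have h2 : |u y - c| ≤ C_D * (C_D ^ 2 * (N * r ^ α))
        + (2 * C_D * N / (1 - 2 ^ (-α))) * d ^ α :=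
      campanato_key μ C_D α r₀ hCD hα0 hdbl u hu hint N hN0 hopt' y d hd0 hdr₀ c
        (C_D ^ 2 * (N * r ^ α)) (by positivity) hc2
    have htri : |u x - u y| ≤ |u x - c| + |u y - c| := by
      have := abs_sub_le (u x) c (u y)
      rw [abs_sub_comm c (u y)] at this
      linarith
    have hrpow : r ^ α = 2 ^ α * d ^ α := by
      rw [hrdef, Real.mul_rpow (by norm_num) hd0.le]
    have hTN : 2 * C_D * N / (1 - 2 ^ (-α)) = (2 * C_D / (1 - 2 ^ (-α))) * N := by
      rw [div_mul_eq_mul_div]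
    have heq : C_D * (N * r ^ α) + (2 * C_D * N / (1 - 2 ^ (-α))) * r ^ α
        + (C_D * (C_D ^ 2 * (N * r ^ α)) + (2 * C_D * N / (1 - 2 ^ (-α))) * d ^ α)
        = K * N * d ^ α := by
      rw [hrpow, hTN, hKdef]
      ring
    have hfin1 : |u x - u y| ≤ C_D * (N * r ^ α) + (2 * C_D * N / (1 - 2 ^ (-α))) * r ^ α
        + (C_D * (C_D ^ 2 * (N * r ^ α)) + (2 * C_D * N / (1 - 2 ^ (-α))) * d ^ α) := by
      linarith [htri, h1, h2]
    exact hfin1.trans_eq heq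
end
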